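/- Let X ⊆ ℝⁿ be closed convex, f convex differentiable whose gradient satisfies the local M-descent inequality at x along x⁺⁺, φ convex, σ > 0, η ≥ 2M > 0, x̄ ∈ ℝⁿ. Let x*(σ; x̄) minimize f + φ + (σ/2)‖· - x̄‖² over X and G_η(x) := η(x - x⁺(η;x)) be the projected gradient. Then ‖G_η(x)‖ ≤ (3σ + 2η)‖x*(σ;x̄) - x‖ + σ‖x*(σ;x̄) - x̄‖. -/

import Mathlib

set_option maxHeartbeats 1000000
open scoped RealInnerProductSpace


theorem qg {n : ℕ} {X : Set (EuclideanSpace ℝ (Fin n))} (hX : Convex ℝ X)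
    (C : EuclideanSpace ℝ (Fin n) → ℝ) (hC : ConvexOn ℝ Set.univ C)
    (μ1 μ2 : ℝ) (hμ1 : 0 ≤ μ1) (hμ2 : 0 ≤ μ2) (y1 y2 m : EuclideanSpace ℝ (Fin n))
    (hm : m ∈ X)
    (hmin : ∀ u ∈ X, C m + μ1/2*‖m-y1‖^2 + μ2/2*‖m-y2‖^2
      ≤ C u + μ1/2*‖u-y1‖^2 + μ2/2*‖u-y2‖^2) :
    ∀ u ∈ X, C m + μ1/2*‖m-y1‖^2 + μ2/2*‖m-y2‖^2 + (μ1+μ2)/2*‖u-m‖^2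
      ≤ C u + μ1/2*‖u-y1‖^2 + μ2/2*‖u-y2‖^2 := by
  intro u hu
  set w := u - m with hw
  have key : 0 ≤ (C u - C m) + μ1*⟪m-y1, w⟫ + μ2*⟪m-y2, w⟫ := by
    by_contra hneg
    push_neg at hneg
    set D := (C u - C m) + μ1*⟪m-y1, w⟫ + μ2*⟪m-y2, w⟫ with hD
    set B := (μ1+μ2)/2*‖w‖^2 with hB
    have hBnn : 0 ≤ B := by positivity
    set t := min 1 (-D/(2*(B+1))) with htdef
    have ht0 : 0 < t := lt_min one_pos (div_pos (by linarith) (by positivity))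
    have ht1 : t ≤ 1 := min_le_left _ _
    have htB : t * B ≤ -D/2 := by
      have h1 : t ≤ -D/(2*(B+1)) := min_le_right _ _
      have : t * B ≤ (-D/(2*(B+1))) * B := by
        apply mul_le_mul_of_nonneg_right h1 hBnn
      calc t * B ≤ (-D/(2*(B+1))) * B := this
        _ ≤ -D/2 := by
          rw [div_mul_eq_mul_div, div_le_div_iff₀ (by positivity) (by norm_num)]
          nlinarith
    have hmem : m + t • w ∈ X := by
      have : (1 - t) • m + t • u ∈ X :=
        hX hm hu (by linarith) (le_of_lt ht0) (by ring)
      have he : m + t • w = (1 - t) • m + t • u := by rw [hw]; module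
      rwa [he]
    have hCle : C (m + t • w) ≤ (1 - t) * C m + t * C u := by
      have he : m + t • w = (1 - t) • m + t • u := by rw [hw]; module
      rw [he]
      simpa using hC.2 (Set.mem_univ m) (Set.mem_univ u) (by linarith) (le_of_lt ht0)
        (by ring)
    have hexp : ∀ y : EuclideanSpace ℝ (Fin n),
        ‖m + t • w - y‖^2 = ‖m-y‖^2 + 2*t*⟪m-y,w⟫ + t^2*‖w‖^2 := by
      intro y
      have he : m + t • w - y = (m - y) + t • w := by abel
      rw [he, norm_add_sq_real, real_inner_smul_right, norm_smul]
      simp [mul_pow, sq_abs]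
      ring
    have hmin' := hmin (m + t • w) hmem
    rw [hexp y1, hexp y2] at hmin'
    nlinarith [hmin', hCle, ht0, htB, mul_pos ht0 ht0]
  have hexp : ∀ y : EuclideanSpace ℝ (Fin n),
      ‖u - y‖^2 = ‖m-y‖^2 + 2*⟪m-y,w⟫ + ‖w‖^2 := by
    intro y
    have he : u - y = (m - y) + w := by rw [hw]; abel
    rw [he, norm_add_sq_real]
  have h1 := hexp y1
  have h2 := hexp y2
  have h3 : ‖u - m‖ = ‖w‖ := by rw [hw]
  rw [h1, h2, h3]
  nlinarith [key]


theorem grad_ineq {n : ℕ} (f : EuclideanSpace ℝ (Fin n) → ℝ) (hf : ConvexOn ℝ Set.univ f)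
    (hdiff : Differentiable ℝ f) (x y : EuclideanSpace ℝ (Fin n)) :
    f x + ⟪gradient f x, y - x⟫ ≤ f y := by
  have hc : HasDerivAt (fun t : ℝ => x + t • (y - x)) (y - x) 0 := by
    simpa using ((hasDerivAt_id (0:ℝ)).smul_const (y - x)).const_add x
  have hgrad : HasFDerivAt f ((InnerProductSpace.toDual ℝ _) (gradient f x)) x :=
    ((hdiff x).hasGradientAt).hasFDerivAt
  have hgrad' : HasFDerivAt f ((InnerProductSpace.toDual ℝ _) (gradient f x))
      (x + (0:ℝ) • (y - x)) := by simpa using hgrad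
  have hcomp : HasDerivAt (fun t : ℝ => f (x + t • (y - x))) ⟪gradient f x, y - x⟫ 0 := by
    have := hgrad'.comp_hasDerivAt 0 hc
    exact this
  have hslope : ∀ t : ℝ, t ∈ Set.Ioo (0:ℝ) 1 →
      slope (fun t : ℝ => f (x + t • (y - x))) 0 t ≤ f y - f x := by
    intro t ht
    have hconv := hf.2 (Set.mem_univ x) (Set.mem_univ y) (by linarith [ht.2] : (0:ℝ) ≤ 1 - t)
      (le_of_lt ht.1) (by ring)
    have hx : x + t • (y - x) = (1 - t) • x + t • y := by module
    rw [slope_def_field, hx]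
    simp only [smul_eq_mul] at hconv
    rw [div_le_iff₀ (by simpa using ht.1)]
    have h0 : x + (0:ℝ) • (y - x) = x := by simp
    rw [h0]
    nlinarith [ht.1]
  have htend : Filter.Tendsto (slope (fun t : ℝ => f (x + t • (y - x))) 0)
      (nhdsWithin 0 (Set.Ioi 0)) (nhds ⟪gradient f x, y - x⟫) :=
    (hasDerivAt_iff_tendsto_slope.mp hcomp).mono_left
      (nhdsWithin_mono 0 (fun y hy => ne_of_gt hy))
  have hle : ⟪gradient f x, y - x⟫ ≤ f y - f x := by
    refine le_of_tendsto htend ?_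
    filter_upwards [Ioo_mem_nhdsGT_of_mem (Set.mem_Ico.mpr ⟨le_refl 0, one_pos⟩)] with t ht
      using hslope t ht
  linarith

theorem stmt_16 {n : ℕ} (X : Set (EuclideanSpace ℝ (Fin n)))
    (hXne : X.Nonempty) (hXclosed : IsClosed X) (hXconv : Convex ℝ X)
    (f φ : EuclideanSpace ℝ (Fin n) → ℝ)
    (hf : ConvexOn ℝ Set.univ f) (hdiff : Differentiable ℝ f)
    (hφ : ConvexOn ℝ Set.univ φ)
    (σ M η : ℝ) (hσ : 0 < σ) (hM : 0 < M) (hη : η ≥ 2 * M)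
    (x xb xpp xplus xstar : EuclideanSpace ℝ (Fin n))
    (hxpp : xpp ∈ X ∧ ∀ u ∈ X,
      ⟪gradient f x, xpp⟫ + φ xpp + σ / 2 * ‖xpp - xb‖ ^ 2 + η / 2 * ‖xpp - x‖ ^ 2 ≤
      ⟪gradient f x, u⟫ + φ u + σ / 2 * ‖u - xb‖ ^ 2 + η / 2 * ‖u - x‖ ^ 2)
    (hdesc : f xpp ≤ f x + ⟪gradient f x, xpp - x⟫ + M / 2 * ‖xpp - x‖ ^ 2)
    (hxplus : xplus ∈ X ∧ ∀ u ∈ X,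
      ⟪gradient f x, xplus⟫ + φ xplus + η / 2 * ‖xplus - x‖ ^ 2 ≤
      ⟪gradient f x, u⟫ + φ u + η / 2 * ‖u - x‖ ^ 2)
    (hxstar : xstar ∈ X ∧ ∀ u ∈ X,
      f xstar + φ xstar + σ / 2 * ‖xstar - xb‖ ^ 2 ≤
      f u + φ u + σ / 2 * ‖u - xb‖ ^ 2) :
    η * ‖x - xplus‖ ≤ (3 * σ + 2 * η) * ‖xstar - x‖ + σ * ‖xstar - xb‖ := by
  have hηpos : 0 < η := by linarith
  set g := gradient f x with hg
  -- convexity of linearized objective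
  have hC1 : ConvexOn ℝ Set.univ (fun u => ⟪g, u⟫ + φ u) := by
    refine ConvexOn.add ⟨convex_univ, fun a _ b _ s t hs ht hst => le_of_eq ?_⟩ hφ
    simp only [inner_add_right, real_inner_smul_right, smul_eq_mul]
  have hCψ : ConvexOn ℝ Set.univ (fun u => f u + φ u) := hf.add hφ
  -- QG1 : prox problem of xplus (modulus η at x)
  have QG1 := qg hXconv (fun u => ⟪g, u⟫ + φ u) hC1 η 0 (le_of_lt hηpos) le_rfl x 0
    xplus hxplus.1 (fun u hu => by have := hxplus.2 u hu; linarith)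
  -- QG2 : prox problem of xpp (moduli σ at xb and η at x)
  have QG2 := qg hXconv (fun u => ⟪g, u⟫ + φ u) hC1 σ η (le_of_lt hσ) (le_of_lt hηpos)
    xb x xpp hxpp.1 (fun u hu => by have := hxpp.2 u hu; linarith)
  -- QG3 : problem of xstar (modulus σ at xb)
  have QG3 := qg hXconv (fun u => f u + φ u) hCψ σ 0 (le_of_lt hσ) le_rfl xb 0
    xstar hxstar.1 (fun u hu => by have := hxstar.2 u hu; linarith)
  have I2 := QG2 xstar hxstar.1
  have I3 := QG3 xpp hxpp.1
  have I4 := grad_ineq f hf hdiff x xstar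
  have I1 := QG1 xpp hxpp.1
  have I2' := QG2 xplus hxplus.1
  rw [inner_sub_right] at I4
  rw [← hg] at I4
  rw [inner_sub_right] at hdesc
  -- Step A : ‖xstar - xpp‖ ≤ ‖xstar - x‖
  have hsq1 : ‖xpp - xstar‖^2 = ‖xstar - xpp‖^2 := by rw [norm_sub_rev]
  rw [hsq1] at I3
  have hσd : 0 ≤ σ * ‖xstar - xpp‖^2 := by positivity
  have hMp : 0 ≤ (η - 2*M) * ‖xpp - x‖^2 :=
    mul_nonneg (by linarith) (by positivity)
  have hMp2 : 0 ≤ M * ‖xpp - x‖^2 := by positivity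
  have hA : η * ‖xstar - xpp‖^2 ≤ η * ‖xstar - x‖^2 := by linarith [I2, I3, I4, hdesc, hσd, hMp, hMp2]
  have hd : ‖xstar - xpp‖ ≤ ‖xstar - x‖ := by
    have h2 : ‖xstar - xpp‖^2 ≤ ‖xstar - x‖^2 := le_of_mul_le_mul_left (by linarith) hηpos
    nlinarith [norm_nonneg (xstar - xpp), norm_nonneg (xstar - x)]
  -- Step B : η‖xplus - xpp‖ ≤ σ(‖xstar-xpp‖ + ‖xstar-xb‖)
  have hsq2 : ‖xpp - xplus‖^2 = ‖xplus - xpp‖^2 := by rw [norm_sub_rev]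
  rw [hsq2] at I1
  have hNplb : ‖xplus - xb‖^2
      = ‖xplus - xpp‖^2 + 2*⟪xplus - xpp, xpp - xb⟫ + ‖xpp - xb‖^2 := by
    have he : xplus - xb = (xplus - xpp) + (xpp - xb) := by abel
    rw [he, norm_add_sq_real]
  have hNplb' : σ/2 * ‖xplus - xb‖^2
      = σ/2 * (‖xplus - xpp‖^2 + 2*⟪xplus - xpp, xpp - xb⟫ + ‖xpp - xb‖^2) := by
    rw [hNplb]
  have hB : η * ‖xplus - xpp‖^2 ≤ σ * ⟪xplus - xpp, xpp - xb⟫ := by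
    linarith [I1, I2', hNplb']
  have hcs : ⟪xplus - xpp, xpp - xb⟫ ≤ ‖xplus - xpp‖ * ‖xpp - xb‖ := real_inner_le_norm _ _
  have hnb : ‖xpp - xb‖ ≤ ‖xstar - xpp‖ + ‖xstar - xb‖ := by
    calc ‖xpp - xb‖ = ‖(xpp - xstar) + (xstar - xb)‖ := by rw [show xpp - xb = (xpp - xstar) + (xstar - xb) from by abel]
      _ ≤ ‖xpp - xstar‖ + ‖xstar - xb‖ := norm_add_le _ _
      _ = ‖xstar - xpp‖ + ‖xstar - xb‖ := by rw [norm_sub_rev]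
  have hB2 : η * ‖xplus - xpp‖^2
      ≤ σ * (‖xplus - xpp‖ * (‖xstar - xpp‖ + ‖xstar - xb‖)) := by
    calc η * ‖xplus - xpp‖^2 ≤ σ * ⟪xplus - xpp, xpp - xb⟫ := hB
      _ ≤ σ * (‖xplus - xpp‖ * ‖xpp - xb‖) :=
          mul_le_mul_of_nonneg_left hcs (le_of_lt hσ)
      _ ≤ σ * (‖xplus - xpp‖ * (‖xstar - xpp‖ + ‖xstar - xb‖)) :=
          mul_le_mul_of_nonneg_left
            (mul_le_mul_of_nonneg_left hnb (norm_nonneg _)) (le_of_lt hσ)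
  have hBfin : η * ‖xplus - xpp‖ ≤ σ * (‖xstar - xpp‖ + ‖xstar - xb‖) := by
    rcases eq_or_lt_of_le (norm_nonneg (xplus - xpp)) with h0 | hpos
    · rw [← h0, mul_zero]; positivity
    · have h2 : (η * ‖xplus - xpp‖) * ‖xplus - xpp‖
          ≤ (σ * (‖xstar - xpp‖ + ‖xstar - xb‖)) * ‖xplus - xpp‖ := by linarith [hB2]
      exact le_of_mul_le_mul_right h2 hpos
  -- triangle inequality and conclusion
  have htri : ‖x - xplus‖ ≤ ‖xstar - x‖ + ‖xstar - xpp‖ + ‖xplus - xpp‖ := by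
    calc ‖x - xplus‖ = ‖(x - xstar) + (xstar - xpp) + (xpp - xplus)‖ := by
          rw [show x - xplus = (x - xstar) + (xstar - xpp) + (xpp - xplus) from by abel]
      _ ≤ ‖(x - xstar) + (xstar - xpp)‖ + ‖xpp - xplus‖ := norm_add_le _ _
      _ ≤ ‖x - xstar‖ + ‖xstar - xpp‖ + ‖xpp - xplus‖ := by
          linarith [norm_add_le (x - xstar) (xstar - xpp)]
      _ = ‖xstar - x‖ + ‖xstar - xpp‖ + ‖xplus - xpp‖ := by
          rw [norm_sub_rev x xstar, norm_sub_rev xpp xplus]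
  have h1 : η * ‖x - xplus‖ ≤ η * (‖xstar - x‖ + ‖xstar - xpp‖ + ‖xplus - xpp‖) :=
    mul_le_mul_of_nonneg_left htri (le_of_lt hηpos)
  have hηd : η * ‖xstar - xpp‖ ≤ η * ‖xstar - x‖ :=
    mul_le_mul_of_nonneg_left hd (le_of_lt hηpos)
  have hσd2 : σ * ‖xstar - xpp‖ ≤ σ * ‖xstar - x‖ :=
    mul_le_mul_of_nonneg_left hd (le_of_lt hσ)
  have hσs : 0 ≤ σ * ‖xstar - x‖ := by positivity
  linarith [h1, hηd, hσd2, hBfin, hσs]
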